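/- arXiv:math/0211341 — 3 statements merged into one kernel-verified Lean document; each statement's English description precedes it below -/
import Mathlib

section
/- If X is a Banach space and Y, Z are closed subspaces of X of equal finite codimension, each of which is complemented in X, and u : Y → Z is an isomorphism, then u extends to an isomorphic automorphism of X. -/
private lemma isCompl_of_proj {X : Type*} [NormedAddCommGroup X] [NormedSpace ℝ X]
    (Y : Submodule ℝ X) (P : X →L[ℝ] X) (h1 : ∀ x : X, P x ∈ Y) (h2 : ∀ y ∈ Y, P y = y) :
    IsCompl Y (LinearMap.ker (P : X →ₗ[ℝ] X)) := by
  constructor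
  · rw [Submodule.disjoint_def]
    intro x hx hker
    have : P x = 0 := hker
    rw [h2 x hx] at this
    exact this
  · rw [codisjoint_iff_le_sup]
    intro x _
    have hk : x - P x ∈ LinearMap.ker (P : X →ₗ[ℝ] X) := by
      simp only [LinearMap.mem_ker]
      show P (x - P x) = 0
      rw [map_sub, h2 (P x) (h1 x), sub_self]
    have : x = P x + (x - P x) := by abel
    rw [this]
    exact Submodule.add_mem_sup (h1 x) hk

/-- If `Y`, `Z` are closed subspaces of a Banach space `X` of equal finite codimension, each
complemented in `X`, then every isomorphism `u : Y → Z` extends to an automorphism of `X`. -/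
theorem extend_iso_finite_codim
    (X : Type*) [NormedAddCommGroup X] [NormedSpace ℝ X] [CompleteSpace X]
    (Y Z : Submodule ℝ X) (hY : IsClosed (Y : Set X)) (hZ : IsClosed (Z : Set X))
    [FiniteDimensional ℝ (X ⧸ Y)] [FiniteDimensional ℝ (X ⧸ Z)]
    (hcodim : Module.finrank ℝ (X ⧸ Y) = Module.finrank ℝ (X ⧸ Z))
    (hPY : ∃ P : X →L[ℝ] X, (∀ x : X, P x ∈ Y) ∧ ∀ y ∈ Y, P y = y)
    (hPZ : ∃ P : X →L[ℝ] X, (∀ x : X, P x ∈ Z) ∧ ∀ z ∈ Z, P z = z)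
    (u : Y ≃L[ℝ] Z) :
    ∃ U : X ≃L[ℝ] X, ∀ y : Y, U (y : X) = (u y : X) := by
  obtain ⟨P, hP1, hP2⟩ := hPY
  obtain ⟨Q, hQ1, hQ2⟩ := hPZ
  set KY := LinearMap.ker (P : X →ₗ[ℝ] X) with hKY
  set KZ := LinearMap.ker (Q : X →ₗ[ℝ] X) with hKZ
  have hcY : IsCompl Y KY := isCompl_of_proj Y P hP1 hP2
  have hcZ : IsCompl Z KZ := isCompl_of_proj Z Q hQ1 hQ2
  have hKYc : IsClosed (KY : Set X) := ContinuousLinearMap.isClosed_ker P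
  have hKZc : IsClosed (KZ : Set X) := ContinuousLinearMap.isClosed_ker Q
  have eY : (X ⧸ Y) ≃ₗ[ℝ] KY := Submodule.quotientEquivOfIsCompl Y KY hcY
  have eZ : (X ⧸ Z) ≃ₗ[ℝ] KZ := Submodule.quotientEquivOfIsCompl Z KZ hcZ
  haveI : FiniteDimensional ℝ KY := Module.Finite.equiv eY
  haveI : FiniteDimensional ℝ KZ := Module.Finite.equiv eZ
  have hfr : Module.finrank ℝ KY = Module.finrank ℝ KZ := by
    rw [← eY.finrank_eq, ← eZ.finrank_eq, hcodim]
  obtain ⟨w⟩ : Nonempty (KY ≃ₗ[ℝ] KZ) := ⟨LinearEquiv.ofFinrankEq _ _ hfr⟩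
  let wc : KY ≃L[ℝ] KZ := w.toContinuousLinearEquiv
  let e1 : (Y × KY) ≃L[ℝ] X := Submodule.prodEquivOfClosedCompl Y KY hcY hY hKYc
  let e2 : (Z × KZ) ≃L[ℝ] X := Submodule.prodEquivOfClosedCompl Z KZ hcZ hZ hKZc
  refine ⟨e1.symm.trans ((u.prodCongr wc).trans e2), fun y => ?_⟩
  have h1 : e1.symm (y : X) = (y, 0) := by
    show (Submodule.prodEquivOfIsCompl Y KY hcY).symm (y : X) = (y, 0)
    exact Submodule.prodEquivOfIsCompl_symm_apply_left (p := Y) (q := KY) hcY y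
  simp only [ContinuousLinearEquiv.trans_apply, h1, ContinuousLinearEquiv.prodCongr_apply]
  show (Submodule.prodEquivOfIsCompl Z KZ hcZ) (u y, wc 0) = (u y : X)
  simp [Submodule.coe_prodEquivOfIsCompl']
end

section
/- If (vₙ) is a sequence of bounded linear operators on a Banach space E converging in operator norm to V, each vₙ is an isomorphism onto E with ‖vₙ‖·‖vₙ⁻¹‖ ≤ C·∏_{k=1}^{n}(1+ε^k) for a fixed 0 < ε < 1 and constant C, and the norms ‖vₙ⁻¹‖ are uniformly bounded, then V is an isomorphism of E onto itself with ‖V‖·‖V⁻¹‖ ≤ C·∏_{n=1}^{∞}(1+ε^n). -/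
open Filter Finset

/-- If a sequence of isomorphisms `vₙ` of a Banach space `E` converges in operator norm to `V`,
with `‖vₙ‖·‖vₙ⁻¹‖ ≤ C·∏_{k=1}^{n}(1+ε^k)` and `‖vₙ⁻¹‖` uniformly bounded, then `V` is an
isomorphism of `E` onto itself with `‖V‖·‖V⁻¹‖ ≤ C·∏_{n=1}^{∞}(1+ε^n)`. -/
theorem limit_of_isomorphisms
    (E : Type*) [NormedAddCommGroup E] [NormedSpace ℝ E] [CompleteSpace E]
    (v : ℕ → (E ≃L[ℝ] E)) (V : E →L[ℝ] E) (ε C M : ℝ) (hε0 : 0 < ε) (hε1 : ε < 1)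
    (hbound : ∀ n : ℕ, ‖(v n : E →L[ℝ] E)‖ * ‖((v n).symm : E →L[ℝ] E)‖ ≤
      C * ∏ k ∈ Finset.Icc 1 n, (1 + ε ^ k))
    (hM : ∀ n : ℕ, ‖((v n).symm : E →L[ℝ] E)‖ ≤ M)
    (hconv : Tendsto (fun n => ‖(v n : E →L[ℝ] E) - V‖) atTop (nhds 0)) :
    ∃ W : E ≃L[ℝ] E, (W : E →L[ℝ] E) = V ∧
      ‖(W : E →L[ℝ] E)‖ * ‖(W.symm : E →L[ℝ] E)‖ ≤ C * ∏' n : ℕ, (1 + ε ^ (n + 1)) := by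
  -- multipliability of the infinite product
  have hgeom : Summable (fun n : ℕ => ε ^ (n + 1)) := by
    have := (summable_geometric_of_lt_one hε0.le hε1).mul_right ε
    exact this.congr fun n => (pow_succ ε n).symm
  have hsum : Summable (fun n : ℕ => Real.log (1 + ε ^ (n + 1))) := by
    refine Summable.of_nonneg_of_le
      (fun n => Real.log_nonneg (by nlinarith [pow_pos hε0 (n + 1)]))
      (fun n => ?_) hgeom
    have h1 : (0 : ℝ) < 1 + ε ^ (n + 1) := by positivity
    have := Real.log_le_sub_one_of_pos h1
    linarith
  have hmul : Multipliable (fun n : ℕ => 1 + ε ^ (n + 1)) :=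
    Real.multipliable_of_summable_log (f := fun n : ℕ => 1 + ε ^ (n + 1))
      (fun n => by positivity) hsum
  have htprod1 : (1 : ℝ) ≤ ∏' n : ℕ, (1 + ε ^ (n + 1)) := by
    have heq' := Real.rexp_tsum_eq_tprod (f := fun n : ℕ => 1 + ε ^ (n + 1))
      (fun n => by positivity) hsum
    rw [← heq']
    exact Real.one_le_exp (tsum_nonneg fun n =>
      Real.log_nonneg (by nlinarith [pow_pos hε0 (n + 1)]))
  -- partial products converge to the infinite product
  have hIcc : ∀ n : ℕ, ∏ k ∈ Finset.Icc 1 n, (1 + ε ^ k)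
      = ∏ k ∈ Finset.range n, (1 + ε ^ (k + 1)) := by
    intro n
    rw [← Finset.Ico_add_one_right_eq_Icc, Finset.prod_Ico_eq_prod_range]
    simp [add_comm]
  have hprodtend : Tendsto (fun n => C * ∏ k ∈ Finset.Icc 1 n, (1 + ε ^ k)) atTop
      (nhds (C * ∏' n : ℕ, (1 + ε ^ (n + 1)))) := by
    simp only [hIcc]
    exact (hmul.hasProd.tendsto_prod_nat).const_mul C
  rcases subsingleton_or_nontrivial E with hE | hE
  · refine ⟨ContinuousLinearEquiv.refl ℝ E, Subsingleton.elim _ _, ?_⟩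
    have h0 : ∀ f : E →L[ℝ] E, ‖f‖ = 0 := fun f => by
      rw [Subsingleton.elim f 0, norm_zero]
    rw [h0, h0, mul_zero]
    have hC : 0 ≤ C := by have := hbound 0; simpa [h0] using this
    positivity
  · -- nontrivial case
    have hv0 : (0 : ℝ) < ‖((v 0).symm : E →L[ℝ] E)‖ := by
      rw [norm_pos_iff]
      intro h
      obtain ⟨x, hx⟩ := exists_ne (0 : E)
      apply hx
      have : (v 0) (((v 0).symm : E →L[ℝ] E) x) = x := (v 0).apply_symm_apply x
      rw [h] at this
      simpa using this.symm
    have hM0 : 0 < M := lt_of_lt_of_le hv0 (hM 0)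
    have hMinv : (0 : ℝ) < M⁻¹ := by positivity
    obtain ⟨N, hN⟩ := (hconv.eventually (gt_mem_nhds hMinv)).exists
    have hnear : ‖V - ((v N).toUnit : E →L[ℝ] E)‖
        < ‖(↑((v N).toUnit)⁻¹ : E →L[ℝ] E)‖⁻¹ := by
      have h1 : ‖V - ((v N) : E →L[ℝ] E)‖ = ‖((v N) : E →L[ℝ] E) - V‖ := norm_sub_rev _ _
      have h2 : (↑((v N).toUnit)⁻¹ : E →L[ℝ] E) = ((v N).symm : E →L[ℝ] E) := rfl
      have hvN : (0 : ℝ) < ‖((v N).symm : E →L[ℝ] E)‖ := by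
        rw [norm_pos_iff]
        intro h
        obtain ⟨x, hx⟩ := exists_ne (0 : E)
        apply hx
        have : (v N) (((v N).symm : E →L[ℝ] E) x) = x := (v N).apply_symm_apply x
        rw [h] at this
        simpa using this.symm
      have h3 : M⁻¹ ≤ ‖((v N).symm : E →L[ℝ] E)‖⁻¹ :=
        inv_anti₀ hvN (hM N)
      calc ‖V - ((v N).toUnit : E →L[ℝ] E)‖ = ‖((v N) : E →L[ℝ] E) - V‖ := h1
        _ < M⁻¹ := hN
        _ ≤ ‖(↑((v N).toUnit)⁻¹ : E →L[ℝ] E)‖⁻¹ := by rw [h2]; exact h3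
    set u : (E →L[ℝ] E)ˣ := Units.ofNearby (v N).toUnit V hnear with hu
    refine ⟨ContinuousLinearEquiv.unitsEquiv ℝ E u, rfl, ?_⟩
    -- convergence of v n to V and of inverses
    have hv : Tendsto (fun n => ((v n) : E →L[ℝ] E)) atTop (nhds V) :=
      tendsto_iff_norm_sub_tendsto_zero.mpr hconv
    have hVu : (u : E →L[ℝ] E) = V := rfl
    have hinv : Tendsto (fun n => Ring.inverse ((v n) : E →L[ℝ] E)) atTop
        (nhds (Ring.inverse (u : E →L[ℝ] E))) := by
      exact ((NormedRing.inverse_continuousAt u).tendsto.comp (hVu ▸ hv))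
    have hinv' : Tendsto (fun n => (((v n).symm) : E →L[ℝ] E)) atTop
        (nhds ((((ContinuousLinearEquiv.unitsEquiv ℝ E u).symm) : E →L[ℝ] E))) := by
      have e1 : ∀ n : ℕ, Ring.inverse ((v n) : E →L[ℝ] E) = (((v n).symm) : E →L[ℝ] E) := by
        intro n
        have : ((v n) : E →L[ℝ] E) = ((v n).toUnit : E →L[ℝ] E) := rfl
        rw [this, Ring.inverse_unit]
        rfl
      have e2 : Ring.inverse (u : E →L[ℝ] E)
          = (((ContinuousLinearEquiv.unitsEquiv ℝ E u).symm) : E →L[ℝ] E) := by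
        rw [Ring.inverse_unit]
        rfl
      simpa only [e1, e2] using hinv
    have hnorms : Tendsto
        (fun n => ‖((v n) : E →L[ℝ] E)‖ * ‖(((v n).symm) : E →L[ℝ] E)‖) atTop
        (nhds (‖V‖ * ‖(((ContinuousLinearEquiv.unitsEquiv ℝ E u).symm) : E →L[ℝ] E)‖)) :=
      (hv.norm).mul (hinv'.norm)
    exact le_of_tendsto_of_tendsto' hnorms hprodtend hbound
end

section
/- Let E be a Banach space and F a complemented subspace of E such that every isomorphism between subspaces of E of equal codimension extends to an automorphism of E. Suppose A, B are isomorphic closed subspaces of F of equal codimension in F, with u : A → B an isomorphism, and suppose the resulting intersection F ∩ UF (U the extending automorphism) is complemented in E with F' and F'' the complements of F ∩ UF in F and UF respectively isomorphic via v. Then w := (v ⊕ id) ∘ U|_F is an automorphism of F whose restriction to A equals u. -/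
/-- If `F` is a complemented subspace of a subspace-homogeneous Banach space `E`, `A, B` are
isomorphic closed subspaces of `F` of equal codimension in `F` with isomorphism `u : A → B`,
`U` an automorphism of `E` extending `u`, `F ∩ UF` is complemented in `E`, and `F'`, `F''` are
complements of `F ∩ UF` in `F` and in `UF` respectively, isomorphic via `v`, then there is an
automorphism `w` of `F` whose restriction to `A` equals `u` (and which agrees with `U` on
vectors carried into `F ∩ UF`). -/
theorem automorphism_of_complemented_subspace
    (E : Type*) [NormedAddCommGroup E] [NormedSpace ℝ E] [CompleteSpace E]
    (F : Submodule ℝ E) (hF : IsClosed (F : Set E))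
    (P : E →L[ℝ] E) (hPF : ∀ x : E, P x ∈ F) (hPid : ∀ y ∈ F, P y = y)
    (hhom : ∀ (A B : Submodule ℝ E), IsClosed (A : Set E) → IsClosed (B : Set E) →
      Module.rank ℝ (E ⧸ A) = Module.rank ℝ (E ⧸ B) →
      ∀ u₀ : A ≃L[ℝ] B, ∃ U₀ : E ≃L[ℝ] E, ∀ a : A, U₀ (a : E) = (u₀ a : E))
    (A B : Submodule ℝ E) (hA : IsClosed (A : Set E)) (hB : IsClosed (B : Set E))
    (hAF : A ≤ F) (hBF : B ≤ F)
    (hcodim : Module.rank ℝ (F ⧸ A.comap F.subtype) = Module.rank ℝ (F ⧸ B.comap F.subtype))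
    (u : A ≃L[ℝ] B)
    (U : E ≃L[ℝ] E) (hU : ∀ a : A, U (a : E) = (u a : E))
    (hQ : ∃ Q : E →L[ℝ] E, (∀ x : E, Q x ∈ F ⊓ F.map ((U : E →L[ℝ] E) : E →ₗ[ℝ] E)) ∧
      ∀ y ∈ F ⊓ F.map ((U : E →L[ℝ] E) : E →ₗ[ℝ] E), Q y = y)
    (F' F'' : Submodule ℝ E)
    (hF'₁ : (F ⊓ F.map ((U : E →L[ℝ] E) : E →ₗ[ℝ] E)) ⊔ F' = F)
    (hF'₂ : (F ⊓ F.map ((U : E →L[ℝ] E) : E →ₗ[ℝ] E)) ⊓ F' = ⊥)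
    (hF''₁ : (F ⊓ F.map ((U : E →L[ℝ] E) : E →ₗ[ℝ] E)) ⊔ F'' = F.map ((U : E →L[ℝ] E) : E →ₗ[ℝ] E))
    (hF''₂ : (F ⊓ F.map ((U : E →L[ℝ] E) : E →ₗ[ℝ] E)) ⊓ F'' = ⊥)
    (v : F' ≃L[ℝ] F'') :
    ∃ w : F ≃L[ℝ] F,
      (∀ a : A, ((w ⟨(a : E), hAF a.2⟩ : F) : E) = ((u a : B) : E)) ∧
      (∀ x : F, U (x : E) ∈ F ⊓ F.map ((U : E →L[ℝ] E) : E →ₗ[ℝ] E) →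
        ((w x : F) : E) = U (x : E)) := by
  classical
  haveI : CompleteSpace F := hF.completeSpace_coe
  -- basic notation
  set UF : Submodule ℝ E := F.map ((U : E →L[ℝ] E) : E →ₗ[ℝ] E) with hUFdef
  set M : Submodule ℝ E := F ⊓ UF with hMdef
  have hMF : M ≤ F := inf_le_left
  have hMUF : M ≤ UF := inf_le_right
  have hF'F : F' ≤ F := hF'₁ ▸ le_sup_right
  have hF''UF : F'' ≤ UF := hF''₁ ▸ le_sup_right
  have hPP : ∀ z : E, P (P z) = P z := fun z => hPid _ (hPF z)
  have hUFmem : ∀ z : E, z ∈ UF ↔ ∃ f ∈ F, U f = z := by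
    intro z
    exact Submodule.mem_map
  have hUinv : ∀ z ∈ UF, U.symm z ∈ F := by
    intro z hz
    obtain ⟨f, hf, rfl⟩ := (hUFmem z).1 hz
    simpa using hf
  -- the subspaces G, X, Y
  set G : Submodule ℝ E := F ⊓ M.comap ((U : E →L[ℝ] E) : E →ₗ[ℝ] E) with hGdef
  have hGmem : ∀ z : E, z ∈ G ↔ z ∈ F ∧ U z ∈ M := by
    intro z
    simp [hGdef, Submodule.mem_inf, Submodule.mem_comap]
  set X : Submodule ℝ E := G.comap (P : E →ₗ[ℝ] E) with hXdef
  set Y : Submodule ℝ E := M.comap (P : E →ₗ[ℝ] E) with hYdef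
  have hXmem : ∀ z : E, z ∈ X ↔ U (P z) ∈ M := by
    intro z
    simp only [hXdef, Submodule.mem_comap, ContinuousLinearMap.coe_coe]
    rw [hGmem]
    exact and_iff_right (hPF z)
  have hYmem : ∀ z : E, z ∈ Y ↔ P z ∈ M := by
    intro z
    simp [hYdef, Submodule.mem_comap]
  -- closedness
  have hUFc : IsClosed (UF : Set E) := by
    have : (UF : Set E) = (U : E →L[ℝ] E) '' (F : Set E) := Submodule.map_coe _ _
    rw [this]
    have := U.toHomeomorph.isClosedMap
    exact this _ hF
  have hMc : IsClosed (M : Set E) := by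
    have : (M : Set E) = (F : Set E) ∩ (UF : Set E) := rfl
    rw [this]; exact hF.inter hUFc
  have hGc : IsClosed (G : Set E) := by
    have : (G : Set E) = (F : Set E) ∩ ((U : E →L[ℝ] E) ⁻¹' (M : Set E)) := rfl
    rw [this]
    exact hF.inter (hMc.preimage (U : E →L[ℝ] E).continuous)
  have hXc : IsClosed (X : Set E) := by
    have : (X : Set E) = P ⁻¹' (G : Set E) := rfl
    rw [this]; exact hGc.preimage P.continuous
  have hYc : IsClosed (Y : Set E) := by
    have : (Y : Set E) = P ⁻¹' (M : Set E) := rfl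
    rw [this]; exact hMc.preimage P.continuous
  -- the isomorphism φ : X ≃L Y
  set Φ : E →L[ℝ] E :=
    ((U : E →L[ℝ] E).comp P + (ContinuousLinearMap.id ℝ E - P)) with hΦdef
  set Ψ : E →L[ℝ] E :=
    (((U.symm : E ≃L[ℝ] E) : E →L[ℝ] E).comp P + (ContinuousLinearMap.id ℝ E - P)) with hΨdef
  have hΦ : ∀ z : E, Φ z = U (P z) + (z - P z) := by
    intro z; simp [hΦdef]
  have hΨ : ∀ z : E, Ψ z = U.symm (P z) + (z - P z) := by
    intro z; simp [hΨdef]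
  have hPΦ : ∀ z ∈ X, P (Φ z) = U (P z) := by
    intro z hz
    have hm : U (P z) ∈ M := (hXmem z).1 hz
    rw [hΦ, map_add, map_sub, hPP, sub_self, add_zero, hPid _ (hMF hm)]
  have hΦY : ∀ z ∈ X, Φ z ∈ Y := by
    intro z hz
    rw [hYmem, hPΦ z hz]
    exact (hXmem z).1 hz
  have hPΨ : ∀ z ∈ Y, P (Ψ z) = U.symm (P z) := by
    intro z hz
    have hm : P z ∈ M := (hYmem z).1 hz
    rw [hΨ, map_add, map_sub, hPP, sub_self, add_zero, hPid _ (hUinv _ (hMUF hm))]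
  have hΨX : ∀ z ∈ Y, Ψ z ∈ X := by
    intro z hz
    rw [hXmem, hPΨ z hz, U.apply_symm_apply]
    exact (hYmem z).1 hz
  have hΨΦ : ∀ z ∈ X, Ψ (Φ z) = z := by
    intro z hz
    rw [hΨ, hPΦ z hz, U.symm_apply_apply, hΦ]
    abel
  have hΦΨ : ∀ z ∈ Y, Φ (Ψ z) = z := by
    intro z hz
    rw [hΦ, hPΨ z hz, U.apply_symm_apply, hΨ]
    abel
  set Φ' : X →L[ℝ] Y :=
    ((Φ.comp X.subtypeL).codRestrict Y (fun x => hΦY _ x.2)) with hΦ'def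
  set Ψ' : Y →L[ℝ] X :=
    ((Ψ.comp Y.subtypeL).codRestrict X (fun y => hΨX _ y.2)) with hΨ'def
  have hΦ'app : ∀ x : X, (Φ' x : E) = Φ (x : E) := by
    intro x; rfl
  have hΨ'app : ∀ y : Y, (Ψ' y : E) = Ψ (y : E) := by
    intro y; rfl
  set φ : X ≃L[ℝ] Y :=
    ContinuousLinearEquiv.equivOfInverse Φ' Ψ'
      (fun x => Subtype.ext (by rw [hΨ'app, hΦ'app]; exact hΨΦ _ x.2))
      (fun y => Subtype.ext (by rw [hΦ'app, hΨ'app]; exact hΦΨ _ y.2)) with hφdef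
  have hφapp : ∀ x : X, (φ x : E) = Φ (x : E) := by
    intro x
    rw [hφdef, ContinuousLinearEquiv.equivOfInverse_apply, hΦ'app]
  -- rank equality
  have hrank : Module.rank ℝ (E ⧸ X) = Module.rank ℝ (E ⧸ Y) := by
    -- E ⧸ X ≃ F ⧸ (X ∩ F)
    set q1 : F →ₗ[ℝ] E ⧸ X := X.mkQ.comp F.subtype with hq1def
    have hq1surj : Function.Surjective q1 := by
      intro z
      obtain ⟨e, rfl⟩ := X.mkQ_surjective z
      refine ⟨⟨P e, hPF e⟩, ?_⟩
      have : P e - e ∈ X := by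
        rw [hXmem, map_sub, hPP, sub_self, map_zero]
        exact M.zero_mem
      simpa [hq1def] using (Submodule.Quotient.eq X).2 this
    set q2 : F →ₗ[ℝ] E ⧸ Y := Y.mkQ.comp F.subtype with hq2def
    have hq2surj : Function.Surjective q2 := by
      intro z
      obtain ⟨e, rfl⟩ := Y.mkQ_surjective z
      refine ⟨⟨P e, hPF e⟩, ?_⟩
      have : P e - e ∈ Y := by
        rw [hYmem, map_sub, hPP, sub_self]
        exact M.zero_mem
      simpa [hq2def] using (Submodule.Quotient.eq Y).2 this
    -- the restriction of U to F, as equivalence onto UF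
    set eU : F ≃ₗ[ℝ] UF :=
      { toFun := fun f => ⟨U f, (hUFmem _).2 ⟨f, f.2, rfl⟩⟩
        invFun := fun g => ⟨U.symm g, hUinv _ g.2⟩
        map_add' := fun a b => Subtype.ext (by simp)
        map_smul' := fun c a => Subtype.ext (by simp)
        left_inv := fun f => Subtype.ext (by simp)
        right_inv := fun g => Subtype.ext (by simp) } with heUdef
    set Mu : Submodule ℝ UF := M.comap UF.subtype with hMudef
    set Mf : Submodule ℝ F := M.comap F.subtype with hMfdef
    set F'f : Submodule ℝ F := F'.comap F.subtype with hF'fdef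
    set F''u : Submodule ℝ UF := F''.comap UF.subtype with hF''udef
    have hmap : (LinearMap.ker q1).map (eU : F →ₗ[ℝ] UF) = Mu := by
      ext y
      simp only [Submodule.mem_map, LinearMap.mem_ker, hq1def, LinearMap.comp_apply,
        Submodule.mkQ_apply, Submodule.Quotient.mk_eq_zero, hMudef, Submodule.mem_comap,
        Submodule.coe_subtype]
      constructor
      · rintro ⟨f, hf, rfl⟩
        have := (hXmem (f : E)).1 hf
        rw [hPid _ f.2] at this
        simpa [heUdef] using this
      · intro hy
        refine ⟨eU.symm y, ?_, eU.apply_symm_apply y⟩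
        have h1 : ((eU.symm y : F) : E) = U.symm (y : E) := by simp [heUdef]
        rw [hXmem, h1, hPid _ (by rw [← h1]; exact (eU.symm y).2 : U.symm (y : E) ∈ F),
          U.apply_symm_apply]
        exact hy
    have hker2 : LinearMap.ker q2 = Mf := by
      ext f
      simp only [LinearMap.mem_ker, hq2def, LinearMap.comp_apply, Submodule.mkQ_apply,
        Submodule.Quotient.mk_eq_zero, hMfdef, Submodule.mem_comap, Submodule.coe_subtype]
      rw [hYmem, hPid _ f.2]
    have hcomplf : IsCompl Mf F'f := by
      constructor
      · rw [disjoint_iff]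
        ext x
        simp only [Submodule.mem_inf, hMfdef, hF'fdef, Submodule.mem_comap,
          Submodule.coe_subtype, Submodule.mem_bot]
        constructor
        · rintro ⟨h1, h2⟩
          have : (x : E) ∈ M ⊓ F' := ⟨h1, h2⟩
          rw [hF'₂] at this
          exact Subtype.ext (by simpa using this)
        · rintro rfl; simp
      · rw [codisjoint_iff, Submodule.eq_top_iff']
        intro f
        have : (f : E) ∈ M ⊔ F' := by rw [hF'₁]; exact f.2
        obtain ⟨m, hm, x, hx, hmx⟩ := Submodule.mem_sup.1 this
        refine Submodule.mem_sup.2 ⟨⟨m, hMF hm⟩, ?_, ⟨x, hF'F hx⟩, ?_, ?_⟩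
        · simpa [hMfdef] using hm
        · simpa [hF'fdef] using hx
        · exact Subtype.ext (by simpa using hmx)
    have hcomplu : IsCompl Mu F''u := by
      constructor
      · rw [disjoint_iff]
        ext x
        simp only [Submodule.mem_inf, hMudef, hF''udef, Submodule.mem_comap,
          Submodule.coe_subtype, Submodule.mem_bot]
        constructor
        · rintro ⟨h1, h2⟩
          have : (x : E) ∈ M ⊓ F'' := ⟨h1, h2⟩
          rw [hF''₂] at this
          exact Subtype.ext (by simpa using this)
        · rintro rfl; simp
      · rw [codisjoint_iff, Submodule.eq_top_iff']
        intro g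
        have : (g : E) ∈ M ⊔ F'' := by rw [hF''₁]; exact g.2
        obtain ⟨m, hm, x, hx, hmx⟩ := Submodule.mem_sup.1 this
        refine Submodule.mem_sup.2 ⟨⟨m, hMUF hm⟩, ?_, ⟨x, hF''UF hx⟩, ?_, ?_⟩
        · simpa [hMudef] using hm
        · simpa [hF''udef] using hx
        · exact Subtype.ext (by simpa using hmx)
    have total : (E ⧸ X) ≃ₗ[ℝ] (E ⧸ Y) :=
      (q1.quotKerEquivOfSurjective hq1surj).symm ≪≫ₗ
        (Submodule.Quotient.equiv (LinearMap.ker q1) Mu eU hmap) ≪≫ₗ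
        (Submodule.quotientEquivOfIsCompl Mu F''u hcomplu) ≪≫ₗ
        (Submodule.comapSubtypeEquivOfLe hF''UF) ≪≫ₗ
        v.symm.toLinearEquiv ≪≫ₗ
        (Submodule.comapSubtypeEquivOfLe hF'F).symm ≪≫ₗ
        (Submodule.quotientEquivOfIsCompl Mf F'f hcomplf).symm ≪≫ₗ
        (Submodule.quotEquivOfEq Mf (LinearMap.ker q2) hker2.symm) ≪≫ₗ
        (q2.quotKerEquivOfSurjective hq2surj)
    exact total.rank_eq
  -- get the global automorphism V extending φ
  obtain ⟨V, hV⟩ := hhom X Y hXc hYc hrank φ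
  have hVX : ∀ z : E, z ∈ X → V z = U (P z) + (z - P z) := by
    intro z hz
    have := hV ⟨z, hz⟩
    rw [hφapp ⟨z, hz⟩] at this
    simpa [hΦ z] using this
  have hVfix : ∀ z : E, P z = 0 → V z = z := by
    intro z hz
    have hzX : z ∈ X := by rw [hXmem, hz, map_zero]; exact M.zero_mem
    rw [hVX z hzX, hz, map_zero, sub_zero, zero_add]
  -- w := P ∘ V restricted to F
  set wmap : F →L[ℝ] F :=
    ((P.comp ((V : E →L[ℝ] E).comp F.subtypeL)).codRestrict F (fun f => hPF _)) with hwdef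
  have hwapp : ∀ f : F, ((wmap f : F) : E) = P (V (f : E)) := by
    intro f; rfl
  have hker : LinearMap.ker (wmap : F →ₗ[ℝ] F) = ⊥ := by
    rw [LinearMap.ker_eq_bot']
    intro f hf
    have h0 : P (V (f : E)) = 0 := by
      rw [← hwapp f, show wmap f = 0 from hf]; rfl
    have h1 : V (V (f : E)) = V (f : E) := hVfix _ h0
    have h2 : V (f : E) = (f : E) := V.injective h1
    have h3 : (f : E) = 0 := by
      rw [← hPid _ f.2, ← h2, h0]
    exact Subtype.ext h3
  have hrange : LinearMap.range (wmap : F →ₗ[ℝ] F) = ⊤ := by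
    rw [LinearMap.range_eq_top]
    intro g
    set y : E := V.symm (g : E) with hydef
    refine ⟨⟨P y, hPF y⟩, ?_⟩
    have h1 : P (y - P y) = 0 := by rw [map_sub, hPP, sub_self]
    have h2 : V (y - P y) = y - P y := hVfix _ h1
    have h3 : V (P y) = (g : E) - (y - P y) := by
      have : V y = (g : E) := by rw [hydef, V.apply_symm_apply]
      calc V (P y) = V y - V (y - P y) := by rw [← map_sub, sub_sub_cancel]
        _ = (g : E) - (y - P y) := by rw [this, h2]
    apply Subtype.ext
    rw [ContinuousLinearMap.coe_coe, hwapp]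
    simp only [h3, map_sub, hPid _ g.2, h1, sub_zero]
  set w : F ≃L[ℝ] F := ContinuousLinearEquiv.ofBijective wmap hker hrange with hwdef2
  have hwcoe : ∀ f : F, ((w f : F) : E) = P (V (f : E)) := by
    intro f
    rw [hwdef2, ContinuousLinearEquiv.coeFn_ofBijective, hwapp]
  have main : ∀ x : F, U (x : E) ∈ M → ((w x : F) : E) = U (x : E) := by
    intro x hx
    have hxX : (x : E) ∈ X := by rw [hXmem, hPid _ x.2]; exact hx
    rw [hwcoe, hVX _ hxX, hPid _ x.2, sub_self, add_zero, hPid _ (hMF hx)]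
  refine ⟨w, ?_, main⟩
  intro a
  have haF : (a : E) ∈ F := hAF a.2
  have hm : U (a : E) ∈ M := by
    constructor
    · rw [hU a]; exact hBF (u a).2
    · exact ⟨(a : E), haF, rfl⟩
  have := main ⟨(a : E), haF⟩ hm
  rw [this, hU a]
end
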